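/- For every a > 0 and m > 0, the unique positive solution ν(m,a) of m = κ·tanh(κa/2) satisfies ν(m,a) ≤ ξ(m,a), where ξ(m,a) = √(8m/a) if m ≤ 1/(2a) and ξ(m,a) = 4m if m ≥ 1/(2a). -/
import Mathlib


noncomputable def xi (m a : ℝ) : ℝ := if m ≤ 1 / (2 * a) then Real.sqrt (8 * m / a) else 4 * m

lemma tanh_mono_aux {x y : ℝ} (hxy : x ≤ y) : Real.tanh x ≤ Real.tanh y := by
  rw [Real.tanh_eq_sinh_div_cosh, Real.tanh_eq_sinh_div_cosh,
    div_le_div_iff₀ (Real.cosh_pos _) (Real.cosh_pos _)]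
  have h := Real.sinh_sub y x
  have h2 : 0 ≤ Real.sinh (y - x) := by
    rcases eq_or_lt_of_le (sub_nonneg.mpr hxy) with h' | h'
    · simp [← h']
    · exact le_of_lt (by rwa [Real.sinh_pos_iff])
  nlinarith

lemma cosh_one_lt_two : Real.cosh 1 < 2 := by
  rw [Real.cosh_eq]
  have h1 : Real.exp 1 < 2.7182818286 := Real.exp_one_lt_d9
  have h2 : Real.exp (-1) ≤ 1 := by simpa using Real.exp_le_exp.mpr (by norm_num : (-1:ℝ) ≤ 0)
  norm_num
  linarith

lemma tanh_lb {x : ℝ} (hx : 0 ≤ x) (hx1 : x ≤ 1) : x / 2 ≤ Real.tanh x := by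
  rw [Real.tanh_eq_sinh_div_cosh, le_div_iff₀ (Real.cosh_pos _)]
  have h1 : x ≤ Real.sinh x := by
    rcases eq_or_lt_of_le hx with h | h
    · simp [← h]
    · exact le_of_lt (Real.self_lt_sinh_iff.mpr h)
  have h2 : Real.cosh x ≤ Real.cosh 1 := by
    rw [Real.cosh_le_cosh]
    rw [abs_of_nonneg hx, abs_one]; exact hx1
  have h3 := cosh_one_lt_two
  nlinarith

theorem stmt8 (a m ν : ℝ) (ha : 0 < a) (hm : 0 < m) (hν : 0 < ν)
    (hsol : ν * Real.tanh (ν * a / 2) = m) : ν ≤ xi m a := by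
  -- it suffices that xi m a * tanh (xi m a * a / 2) ≥ m
  have key : m ≤ xi m a * Real.tanh (xi m a * a / 2) := by
    unfold xi
    split_ifs with hcase
    · -- m ≤ 1/(2a), xi = sqrt (8m/a)
      set s := Real.sqrt (8 * m / a) with hs
      have hma : 8 * m / a > 0 := by positivity
      have hs0 : 0 < s := Real.sqrt_pos.mpr hma
      have hsq : s ^ 2 = 8 * m / a := Real.sq_sqrt (le_of_lt hma)
      have hsqa : s ^ 2 * a = 8 * m := by
        rw [eq_div_iff (ne_of_gt ha)] at hsq; exact hsq
      have hx0 : 0 ≤ s * a / 2 := by positivity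
      have hx1 : s * a / 2 ≤ 1 := by
        have h2ma : 2 * m * a ≤ 1 := by
          rw [le_div_iff₀ (by linarith : (0:ℝ) < 2 * a)] at hcase
          linarith
        have : (s * a / 2) ^ 2 ≤ 1 := by
          have : (s * a / 2) ^ 2 = 2 * m * a := by
            field_simp
            nlinarith [hsqa]
          rw [this]; exact h2ma
        nlinarith
      have := tanh_lb hx0 hx1
      have : s * (s * a / 2 / 2) ≤ s * Real.tanh (s * a / 2) := by
        apply mul_le_mul_of_nonneg_left this (le_of_lt hs0)
      have heq : s * (s * a / 2 / 2) = 2 * m := by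
        field_simp
        nlinarith [hsqa]
      linarith
    · -- m > 1/(2a), xi = 4m
      push_neg at hcase
      rw [div_lt_iff₀ (by linarith : (0:ℝ) < 2 * a)] at hcase
      have hx1 : (1:ℝ) ≤ 4 * m * a / 2 := by linarith
      have ht1 : (1:ℝ)/2 ≤ Real.tanh 1 := by
        have := tanh_lb (x := 1) (by norm_num) (le_refl 1)
        linarith
      have ht : (1:ℝ)/2 ≤ Real.tanh (4 * m * a / 2) := ht1.trans (tanh_mono_aux hx1)
      nlinarith [ht]
  by_contra hlt
  push_neg at hlt
  have hxi0 : 0 ≤ xi m a := by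
    unfold xi; split_ifs
    · positivity
    · linarith
  have ht1 : Real.tanh (xi m a * a / 2) ≤ Real.tanh (ν * a / 2) := by
    apply tanh_mono_aux
    have : xi m a * a ≤ ν * a := by nlinarith
    linarith
  have htpos : 0 < Real.tanh (ν * a / 2) := by
    rw [Real.tanh_eq_sinh_div_cosh]
    apply div_pos _ (Real.cosh_pos _)
    rw [Real.sinh_pos_iff]; positivity
  have : xi m a * Real.tanh (xi m a * a / 2) < ν * Real.tanh (ν * a / 2) := by
    calc xi m a * Real.tanh (xi m a * a / 2) ≤ xi m a * Real.tanh (ν * a / 2) :=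
          mul_le_mul_of_nonneg_left ht1 hxi0
      _ < ν * Real.tanh (ν * a / 2) := by
          exact mul_lt_mul_of_pos_right hlt htpos
  linarith [hsol ▸ this]
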